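/- Suppose a greedy procedure repeatedly picks a set C from a finite collection C^+ maximizing (1/w_C) * sum_{i in S \ remaining uncovered elements, i in C} y_i, where the fractional optimum OPT* satisfies sum_{i in S} y_i <= OPT* * max_{C in C^+} (1/w_C) sum_{i in S cap C} y_i (pigeonhole from a fractional cover). Then after the greedy sets have total weight at least ln(rho) * OPT*, the remaining uncovered elements S' satisfy sum_{i in S'} y_i <= (1/rho) * sum_{i in I} y_i. -/

import Mathlib

open Finset

/-- Core claim in the proof of Theorem 2: after the greedy sets have total weight at least
`log rho * OPT*`, the uncovered elements carry at most a `1/rho` fraction of the dual mass. -/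
theorem stmt2 {ι : Type*} [DecidableEq ι] (I : Finset ι) (y : ι → ℝ) (hy : ∀ i, 0 ≤ y i)
    (𝒞 : Finset (Finset ι)) (w : Finset ι → ℝ) (hw : ∀ C ∈ 𝒞, 0 < w C)
    (OPTstar rho : ℝ) (hOPT : 0 < OPTstar) (hrho : 1 ≤ rho)
    (S : ℕ → Finset ι) (C : ℕ → Finset ι) (hS0 : S 0 = I)
    (hC : ∀ k, C (k + 1) ∈ 𝒞)
    (hSrec : ∀ k, S (k + 1) = S k \ C (k + 1))
    (hgreedy : ∀ k, (1 / OPTstar) * ∑ i ∈ S k, y i ≤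
      (1 / w (C (k + 1))) * ∑ i ∈ S k ∩ C (k + 1), y i)
    (K : ℕ) (hweight : Real.log rho * OPTstar ≤ ∑ q ∈ Finset.Icc 1 K, w (C q)) :
    ∑ i ∈ S K, y i ≤ (1 / rho) * ∑ i ∈ I, y i := by
  set T : ℕ → ℝ := fun k => ∑ i ∈ S k, y i with hT
  have hTnn : ∀ k, 0 ≤ T k := fun k => Finset.sum_nonneg fun i _ => hy i
  have hstep : ∀ k, T (k + 1) ≤ Real.exp (-(w (C (k + 1)) / OPTstar)) * T k := by
    intro k
    have hwpos := hw _ (hC k)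
    have hinter : (w (C (k + 1)) / OPTstar) * T k ≤ ∑ i ∈ S k ∩ C (k + 1), y i := by
      have h := hgreedy k
      rw [one_div, one_div, inv_mul_eq_div, inv_mul_eq_div, div_le_div_iff₀ hOPT hwpos] at h
      rw [div_mul_eq_mul_div, div_le_iff₀ hOPT]
      linear_combination h
    have hsplit : T (k + 1) = T k - ∑ i ∈ S k ∩ C (k + 1), y i := by
      have : T k = T (k + 1) + ∑ i ∈ S k ∩ C (k + 1), y i := by
        simp only [hT, hSrec k]
        rw [← Finset.sdiff_inter_self_left (S k) (C (k + 1))]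
        exact (Finset.sum_sdiff (Finset.inter_subset_left)).symm
      linarith
    have hexp : 1 - w (C (k + 1)) / OPTstar ≤ Real.exp (-(w (C (k + 1)) / OPTstar)) := by
      linarith [Real.add_one_le_exp (-(w (C (k + 1)) / OPTstar))]
    calc T (k + 1) = T k - ∑ i ∈ S k ∩ C (k + 1), y i := hsplit
      _ ≤ (1 - w (C (k + 1)) / OPTstar) * T k := by nlinarith [hinter]
      _ ≤ Real.exp (-(w (C (k + 1)) / OPTstar)) * T k :=
          mul_le_mul_of_nonneg_right hexp (hTnn k)
  have hmain : ∀ K, T K ≤ Real.exp (-((∑ q ∈ Finset.Icc 1 K, w (C q)) / OPTstar)) * T 0 := by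
    intro K
    induction K with
    | zero => simp
    | succ n ih =>
      have h1 : T (n + 1) ≤ Real.exp (-(w (C (n + 1)) / OPTstar)) * T n := hstep n
      have h2 : Real.exp (-(w (C (n + 1)) / OPTstar)) * T n ≤
          Real.exp (-(w (C (n + 1)) / OPTstar)) *
            (Real.exp (-((∑ q ∈ Finset.Icc 1 n, w (C q)) / OPTstar)) * T 0) :=
        mul_le_mul_of_nonneg_left ih (Real.exp_pos _).le
      have h3 : ∑ q ∈ Finset.Icc 1 (n + 1), w (C q)
          = (∑ q ∈ Finset.Icc 1 n, w (C q)) + w (C (n + 1)) :=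
        Finset.sum_Icc_succ_top (Nat.one_le_iff_ne_zero.mpr (Nat.succ_ne_zero n)) _
      calc T (n + 1) ≤ _ := h1.trans h2
        _ = Real.exp (-((∑ q ∈ Finset.Icc 1 (n + 1), w (C q)) / OPTstar)) * T 0 := by
          rw [h3, ← mul_assoc, ← Real.exp_add]
          ring_nf
  have hrho0 : 0 < rho := lt_of_lt_of_le one_pos hrho
  have hexple : Real.exp (-((∑ q ∈ Finset.Icc 1 K, w (C q)) / OPTstar)) ≤ 1 / rho := by
    rw [show (1 : ℝ) / rho = Real.exp (-(Real.log rho)) by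
      rw [Real.exp_neg, Real.exp_log hrho0, one_div]]
    apply Real.exp_le_exp.mpr
    have : Real.log rho ≤ (∑ q ∈ Finset.Icc 1 K, w (C q)) / OPTstar :=
      (le_div_iff₀ hOPT).mpr hweight
    linarith
  calc ∑ i ∈ S K, y i = T K := rfl
    _ ≤ Real.exp (-((∑ q ∈ Finset.Icc 1 K, w (C q)) / OPTstar)) * T 0 := hmain K
    _ ≤ (1 / rho) * T 0 := mul_le_mul_of_nonneg_right hexple (hTnn 0)
    _ = (1 / rho) * ∑ i ∈ I, y i := by rw [hT]; simp [hS0]
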